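/- If m ∉ dom(p), and t reduces to a proper p(m↦0)-whnf and to a proper p(m↦1)-whnf, then t reduces to a proper p-whnf. Here a p-whnf is proper if it is canonical (a constructor/lambda/pair/type former, having no further reduction at any extension of p) or of the form E[f k̄] with k ∉ dom(p). -/

import Mathlib

/-- A condition: (the graph of) a finite partial function `ℕ ⇀ Bool`,
represented as a finite set of pairs. -/
abbrev Cond : Type := Finset (ℕ × Bool)

/-- `p` is (the graph of) a partial function. -/
def IsFunc (p : Cond) : Prop := ∀ x ∈ p, ∀ y ∈ p, x.1 = y.1 → x.2 = y.2

instance (p : Cond) : Decidable (IsFunc p) := by unfold IsFunc; exact inferInstance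

/-- The domain of a condition. -/
def condDom (p : Cond) : Finset ℕ := p.image Prod.fst

/-- `condExt p n b` is `p(n ↦ b) = p ∪ {(n, b)}`. -/
def condExt (p : Cond) (n : ℕ) (b : Bool) : Cond := insert (n, b) p

/-- The partition relation `p ◁ S`. -/
inductive Partn : Cond → Finset Cond → Prop
  | refl (p : Cond) : Partn p {p}
  | split (p : Cond) (n : ℕ) (S₀ S₁ : Finset Cond) :
      n ∉ condDom p → Partn (condExt p n false) S₀ → Partn (condExt p n true) S₁ →
      Partn p (S₀ ∪ S₁)

/-- Terms of the untyped calculus, with a generic function symbol `gen` (the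
symbol `f`), booleans, numerals built from `zero`/`suc`, pairs, λ, and the
recursors. -/
inductive Tm : Type
  | var : ℕ → Tm
  | lam : Tm → Tm
  | app : Tm → Tm → Tm
  | pair : Tm → Tm → Tm
  | fst : Tm → Tm
  | snd : Tm → Tm
  | zero : Tm
  | one : Tm
  | suc : Tm → Tm
  | gen : Tm
  | rec0 : Tm → Tm
  | rec1 : Tm → Tm → Tm
  | rec2 : Tm → Tm → Tm → Tm
  | recN : Tm → Tm → Tm → Tm
  deriving DecidableEq

/-- The numeral `n̄ = Sⁿ 0`. -/
def numeral : ℕ → Tm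
  | 0 => .zero
  | n + 1 => .suc (numeral n)

/-- Booleans as terms. -/
def ofBool : Bool → Tm
  | false => .zero
  | true => .one

/-- de Bruijn lifting of variables `≥ d`. -/
def lift (d : ℕ) : Tm → Tm
  | .var i => if i < d then .var i else .var (i + 1)
  | .lam t => .lam (lift (d + 1) t)
  | .app t u => .app (lift d t) (lift d u)
  | .pair t u => .pair (lift d t) (lift d u)
  | .fst t => .fst (lift d t)
  | .snd t => .snd (lift d t)
  | .zero => .zero
  | .one => .one
  | .suc t => .suc (lift d t)
  | .gen => .gen
  | .rec0 C => .rec0 (lift (d + 1) C)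
  | .rec1 C a => .rec1 (lift (d + 1) C) (lift d a)
  | .rec2 C a b => .rec2 (lift (d + 1) C) (lift d a) (lift d b)
  | .recN C a g => .recN (lift (d + 1) C) (lift d a) (lift d g)

/-- Capture-avoiding substitution `t[a/k]` (de Bruijn). -/
def subst : Tm → ℕ → Tm → Tm
  | .var i, k, a => if i < k then .var i else if i = k then a else .var (i - 1)
  | .lam t, k, a => .lam (subst t (k + 1) (lift 0 a))
  | .app t u, k, a => .app (subst t k a) (subst u k a)
  | .pair t u, k, a => .pair (subst t k a) (subst u k a)
  | .fst t, k, a => .fst (subst t k a)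
  | .snd t, k, a => .snd (subst t k a)
  | .zero, _, _ => .zero
  | .one, _, _ => .one
  | .suc t, k, a => .suc (subst t k a)
  | .gen, _, _ => .gen
  | .rec0 C, k, a => .rec0 (subst C (k + 1) (lift 0 a))
  | .rec1 C c, k, a => .rec1 (subst C (k + 1) (lift 0 a)) (subst c k a)
  | .rec2 C c0 c1, k, a => .rec2 (subst C (k + 1) (lift 0 a)) (subst c0 k a) (subst c1 k a)
  | .recN C cz g, k, a => .recN (subst C (k + 1) (lift 0 a)) (subst cz k a) (subst g k a)

/-- The condition-free base reduction (β/ι). -/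
inductive Step : Tm → Tm → Prop
  | beta (t a : Tm) : Step (.app (.lam t) a) (subst t 0 a)
  | fstPair (u v : Tm) : Step (.fst (.pair u v)) u
  | sndPair (u v : Tm) : Step (.snd (.pair u v)) v
  | rec1Zero (C c : Tm) : Step (.app (.rec1 C c) .zero) c
  | rec2Zero (C c0 c1 : Tm) : Step (.app (.rec2 C c0 c1) .zero) c0
  | rec2One (C c0 c1 : Tm) : Step (.app (.rec2 C c0 c1) .one) c1
  | recNZero (C cz g : Tm) : Step (.app (.recN C cz g) .zero) cz
  | recNSuc (C cz g : Tm) (k : ℕ) :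
      Step (.app (.recN C cz g) (.suc (numeral k)))
        (.app (.app g (numeral k)) (.app (.recN C cz g) (numeral k)))

/-- Evaluation contexts `E ::= [] | E u | E.1 | E.2 | S E | f E | rec … E`. -/
inductive Ctx : Type
  | hole : Ctx
  | appL : Ctx → Tm → Ctx
  | fst : Ctx → Ctx
  | snd : Ctx → Ctx
  | suc : Ctx → Ctx
  | genApp : Ctx → Ctx
  | rec0Arg : Tm → Ctx → Ctx
  | rec1Arg : Tm → Tm → Ctx → Ctx
  | rec2Arg : Tm → Tm → Tm → Ctx → Ctx
  | recNArg : Tm → Tm → Tm → Ctx → Ctx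

/-- Plugging a term into the hole of an evaluation context. -/
def Ctx.fill : Ctx → Tm → Tm
  | .hole, e => e
  | .appL E u, e => .app (E.fill e) u
  | .fst E, e => .fst (E.fill e)
  | .snd E, e => .snd (E.fill e)
  | .suc E, e => .suc (E.fill e)
  | .genApp E, e => .app .gen (E.fill e)
  | .rec0Arg C E, e => .app (.rec0 C) (E.fill e)
  | .rec1Arg C a E, e => .app (.rec1 C a) (E.fill e)
  | .rec2Arg C a b E, e => .app (.rec2 C a b) (E.fill e)
  | .recNArg C cz g E, e => .app (.recN C cz g) (E.fill e)

/-- The condition-indexed one-step reduction `t →_p u`: generated by the base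
reduction, the rule `f k̄ →_p p(k)` for `k ∈ dom p`, and closure under
evaluation contexts. -/
inductive Red (p : Cond) : Tm → Tm → Prop
  | base {t u : Tm} : Step t u → Red p t u
  | genRed {k : ℕ} {b : Bool} : (k, b) ∈ p → Red p (.app .gen (numeral k)) (ofBool b)
  | ctx {e e' : Tm} (E : Ctx) : Red p e e' → Red p (E.fill e) (E.fill e')

/-- Multi-step reduction `t →*_p u`. -/
def Reds (p : Cond) : Tm → Tm → Prop := Relation.ReflTransGen (Red p)

/-- `t` is in `p`-whnf: no further `p`-reduction. -/
def Whnf (p : Cond) (t : Tm) : Prop := ∀ u, ¬ Red p t u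

/-- `t` is canonical (at `p`): it has no further reduction at any extension of `p`. -/
def Canonical (p : Cond) (t : Tm) : Prop := ∀ q : Cond, p ⊆ q → ∀ u, ¬ Red q t u

/-- A proper `p`-whnf: a `p`-whnf that is canonical or of the form `E[f k̄]`
with `k ∉ dom p`. -/
def ProperWhnf (p : Cond) (t : Tm) : Prop :=
  Whnf p t ∧ (Canonical p t ∨
    ∃ (E : Ctx) (k : ℕ), t = E.fill (.app .gen (numeral k)) ∧ k ∉ condDom p)

/-! ### Auxiliary machinery -/

/-- Numeral detection. -/
def toNum : Tm → Option ℕ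
  | .zero => some 0
  | .suc t => (toNum t).map (· + 1)
  | _ => none

lemma toNum_numeral (k : ℕ) : toNum (numeral k) = some k := by
  induction k with
  | zero => rfl
  | succ k ih => simp [numeral, toNum, ih]

lemma toNum_eq : ∀ {t : Tm} {n : ℕ}, toNum t = some n → t = numeral n := by
  intro t
  induction t with
  | zero => intro n h; simp [toNum] at h; subst h; rfl
  | suc t ih =>
      intro n h
      simp [toNum] at h
      obtain ⟨m, hm, rfl⟩ := h
      rw [ih hm]; rfl
  | _ => intro n h <;> simp [toNum] at h

/-- Lookup in a condition. -/
def lookup (q : Cond) (k : ℕ) : Option Bool :=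
  if (k, true) ∈ q then some true else if (k, false) ∈ q then some false else none

lemma lookup_some {q : Cond} {k : ℕ} {b : Bool} (h : lookup q k = some b) : (k, b) ∈ q := by
  unfold lookup at h
  split_ifs at h with h1 h2 <;> simp_all

lemma lookup_of_mem {q : Cond} (hq : IsFunc q) {k : ℕ} {b : Bool} (h : (k, b) ∈ q) :
    lookup q k = some b := by
  unfold lookup
  split_ifs with h1 h2
  · have := hq (k, true) h1 (k, b) h rfl
    simp at this; rw [← this]
  · have := hq (k, false) h2 (k, b) h rfl
    simp at this; rw [← this]
  · cases b
    · exact absurd h h2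
    · exact absurd h h1

/-- A deterministic evaluator computing one `→_q` step. -/
def step (q : Cond) : Tm → Option Tm
  | .app (.lam b) t2 => some (subst b 0 t2)
  | .app .gen t2 =>
      match step q t2 with
      | some t2' => some (.app .gen t2')
      | none =>
          match toNum t2 with
          | some k => (lookup q k).map ofBool
          | none => none
  | .app (.rec0 C) t2 => (step q t2).map (fun x => .app (.rec0 C) x)
  | .app (.rec1 C c) t2 =>
      if t2 = .zero then some c else (step q t2).map (fun x => .app (.rec1 C c) x)
  | .app (.rec2 C c0 c1) t2 =>
      if t2 = .zero then some c0 else if t2 = .one then some c1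
      else (step q t2).map (fun x => .app (.rec2 C c0 c1) x)
  | .app (.recN C cz g) t2 =>
      match toNum t2 with
      | some 0 => some cz
      | some (k+1) => some (.app (.app g (numeral k)) (.app (.recN C cz g) (numeral k)))
      | none => (step q t2).map (fun x => .app (.recN C cz g) x)
  | .app t1 t2 => (step q t1).map (fun x => .app x t2)
  | .fst (.pair a _) => some a
  | .fst t => (step q t).map .fst
  | .snd (.pair _ b) => some b
  | .snd t => (step q t).map .snd
  | .suc t => (step q t).map .suc
  | _ => none

lemma step_numeral (q : Cond) (k : ℕ) : step q (numeral k) = none := by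
  induction k with
  | zero => rfl
  | succ k ih => simp [numeral, step, ih]

lemma step_shape {q : Cond} {t u : Tm} (h : step q t = some u) :
    (∃ a b, t = .app a b) ∨ (∃ a, t = .fst a) ∨ (∃ a, t = .snd a) ∨ (∃ a, t = .suc a) := by
  cases t with
  | app a b => exact Or.inl ⟨a, b, rfl⟩
  | fst a => exact Or.inr (Or.inl ⟨a, rfl⟩)
  | snd a => exact Or.inr (Or.inr (Or.inl ⟨a, rfl⟩))
  | suc a => exact Or.inr (Or.inr (Or.inr ⟨a, rfl⟩))
  | _ => simp [step] at h

lemma toNum_none_of_step {q : Cond} {t u : Tm} (h : step q t = some u) : toNum t = none := by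
  induction t generalizing u with
  | zero => simp [step] at h
  | suc t ih =>
      simp only [step, Option.map_eq_some_iff] at h
      obtain ⟨u', hu', _⟩ := h
      simp [toNum, ih hu']
  | _ => simp [toNum]

lemma step_sound {q : Cond} : ∀ {t u : Tm}, step q t = some u → Red q t u := by
  intro t
  induction t with
  | app t1 t2 ih1 ih2 =>
      intro u h
      cases t1 with
      | lam b =>
          simp only [step, Option.some.injEq] at h
          rw [← h]; exact Red.base (Step.beta b t2)
      | gen =>
          simp only [step] at h
          cases hs : step q t2 with
          | some t2' =>
              rw [hs] at h
              simp only [Option.some.injEq] at h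
              rw [← h]
              exact Red.ctx (Ctx.genApp Ctx.hole) (ih2 hs)
          | none =>
              rw [hs] at h
              cases ht : toNum t2 with
              | some k =>
                  rw [ht] at h
                  simp only [Option.map_eq_some_iff] at h
                  obtain ⟨b, hb, rfl⟩ := h
                  rw [toNum_eq ht]
                  exact Red.genRed (lookup_some hb)
              | none => rw [ht] at h; simp at h
      | rec0 C =>
          simp only [step, Option.map_eq_some_iff] at h
          obtain ⟨t2', h2, rfl⟩ := h
          exact Red.ctx (Ctx.rec0Arg C Ctx.hole) (ih2 h2)
      | rec1 C c =>
          simp only [step] at h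
          split_ifs at h with h0
          · simp only [Option.some.injEq] at h; rw [← h, h0]
            exact Red.base (Step.rec1Zero C c)
          · simp only [Option.map_eq_some_iff] at h
            obtain ⟨t2', h2, rfl⟩ := h
            exact Red.ctx (Ctx.rec1Arg C c Ctx.hole) (ih2 h2)
      | rec2 C c0 c1 =>
          simp only [step] at h
          split_ifs at h with h0 h1
          · simp only [Option.some.injEq] at h; rw [← h, h0]
            exact Red.base (Step.rec2Zero C c0 c1)
          · simp only [Option.some.injEq] at h; rw [← h, h1]
            exact Red.base (Step.rec2One C c0 c1)
          · simp only [Option.map_eq_some_iff] at h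
            obtain ⟨t2', h2, rfl⟩ := h
            exact Red.ctx (Ctx.rec2Arg C c0 c1 Ctx.hole) (ih2 h2)
      | recN C cz g =>
          simp only [step] at h
          cases ht : toNum t2 with
          | some n =>
              rw [ht] at h
              cases n with
              | zero =>
                  simp only [Option.some.injEq] at h
                  rw [← h, toNum_eq ht]
                  exact Red.base (Step.recNZero C cz g)
              | succ k =>
                  simp only [Option.some.injEq] at h
                  rw [← h, toNum_eq ht]
                  exact Red.base (Step.recNSuc C cz g k)
          | none =>
              rw [ht] at h
              simp only [Option.map_eq_some_iff] at h
              obtain ⟨t2', h2, rfl⟩ := h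
              exact Red.ctx (Ctx.recNArg C cz g Ctx.hole) (ih2 h2)
      | var i =>
          simp only [step, Option.map_eq_some_iff] at h
          obtain ⟨t1', h1, rfl⟩ := h
          exact Red.ctx (Ctx.appL Ctx.hole t2) (ih1 h1)
      | app a b =>
          simp only [step, Option.map_eq_some_iff] at h
          obtain ⟨t1', h1, rfl⟩ := h
          exact Red.ctx (Ctx.appL Ctx.hole t2) (ih1 h1)
      | pair a b =>
          simp only [step, Option.map_eq_some_iff] at h
          obtain ⟨t1', h1, rfl⟩ := h
          exact Red.ctx (Ctx.appL Ctx.hole t2) (ih1 h1)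
      | fst a =>
          simp only [step, Option.map_eq_some_iff] at h
          obtain ⟨t1', h1, rfl⟩ := h
          exact Red.ctx (Ctx.appL Ctx.hole t2) (ih1 h1)
      | snd a =>
          simp only [step, Option.map_eq_some_iff] at h
          obtain ⟨t1', h1, rfl⟩ := h
          exact Red.ctx (Ctx.appL Ctx.hole t2) (ih1 h1)
      | zero =>
          simp only [step, Option.map_eq_some_iff] at h
          obtain ⟨t1', h1, rfl⟩ := h
          exact Red.ctx (Ctx.appL Ctx.hole t2) (ih1 h1)
      | one =>
          simp only [step, Option.map_eq_some_iff] at h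
          obtain ⟨t1', h1, rfl⟩ := h
          exact Red.ctx (Ctx.appL Ctx.hole t2) (ih1 h1)
      | suc a =>
          rw [show step q (.app (.suc a) t2) = (step q (.suc a)).map (fun x => .app x t2)
            from rfl, Option.map_eq_some_iff] at h
          obtain ⟨t1', h1, rfl⟩ := h
          exact Red.ctx (Ctx.appL Ctx.hole t2) (ih1 h1)
  | fst t ih =>
      intro u h
      cases t with
      | pair a b =>
          simp only [step, Option.some.injEq] at h
          rw [← h]; exact Red.base (Step.fstPair a b)
      | suc a =>
          rw [show step q (.fst (.suc a)) = (step q (.suc a)).map .fst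
            from rfl, Option.map_eq_some_iff] at h
          obtain ⟨t', h', rfl⟩ := h
          exact Red.ctx (Ctx.fst Ctx.hole) (ih h')
      | _ =>
          simp only [step, Option.map_eq_some_iff] at h
          obtain ⟨t', h', rfl⟩ := h
          exact Red.ctx (Ctx.fst Ctx.hole) (ih h')
  | snd t ih =>
      intro u h
      cases t with
      | pair a b =>
          simp only [step, Option.some.injEq] at h
          rw [← h]; exact Red.base (Step.sndPair a b)
      | suc a =>
          rw [show step q (.snd (.suc a)) = (step q (.suc a)).map .snd
            from rfl, Option.map_eq_some_iff] at h
          obtain ⟨t', h', rfl⟩ := h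
          exact Red.ctx (Ctx.snd Ctx.hole) (ih h')
      | _ =>
          simp only [step, Option.map_eq_some_iff] at h
          obtain ⟨t', h', rfl⟩ := h
          exact Red.ctx (Ctx.snd Ctx.hole) (ih h')
  | suc t ih =>
      intro u h
      simp only [step, Option.map_eq_some_iff] at h
      obtain ⟨t', h', rfl⟩ := h
      exact Red.ctx (Ctx.suc Ctx.hole) (ih h')
  | _ => intro u h <;> simp [step] at h

lemma step_fill {q : Cond} : ∀ (E : Ctx) {e e' : Tm},
    step q e = some e' → step q (E.fill e) = some (E.fill e') := by
  intro E
  induction E with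
  | hole => intro e e' h; exact h
  | appL E u ih =>
      intro e e' h
      have h' := ih h
      have key : ∀ t1 : Tm, ((∃ a b, t1 = .app a b) ∨ (∃ a, t1 = .fst a) ∨
          (∃ a, t1 = .snd a) ∨ (∃ a, t1 = .suc a)) →
          step q (.app t1 u) = (step q t1).map (fun x => .app x u) := by
        rintro t1 (⟨a, b, rfl⟩ | ⟨a, rfl⟩ | ⟨a, rfl⟩ | ⟨a, rfl⟩) <;> rfl
      simp only [Ctx.fill, key _ (step_shape h'), h', Option.map_some]
  | fst E ih =>
      intro e e' h
      have h' := ih h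
      have key : ∀ t1 : Tm, ((∃ a b, t1 = .app a b) ∨ (∃ a, t1 = .fst a) ∨
          (∃ a, t1 = .snd a) ∨ (∃ a, t1 = .suc a)) →
          step q (.fst t1) = (step q t1).map .fst := by
        rintro t1 (⟨a, b, rfl⟩ | ⟨a, rfl⟩ | ⟨a, rfl⟩ | ⟨a, rfl⟩) <;> rfl
      simp only [Ctx.fill, key _ (step_shape h'), h', Option.map_some]
  | snd E ih =>
      intro e e' h
      have h' := ih h
      have key : ∀ t1 : Tm, ((∃ a b, t1 = .app a b) ∨ (∃ a, t1 = .fst a) ∨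
          (∃ a, t1 = .snd a) ∨ (∃ a, t1 = .suc a)) →
          step q (.snd t1) = (step q t1).map .snd := by
        rintro t1 (⟨a, b, rfl⟩ | ⟨a, rfl⟩ | ⟨a, rfl⟩ | ⟨a, rfl⟩) <;> rfl
      simp only [Ctx.fill, key _ (step_shape h'), h', Option.map_some]
  | suc E ih =>
      intro e e' h
      simp only [Ctx.fill]
      simp [step, ih h]
  | genApp E ih =>
      intro e e' h
      simp only [Ctx.fill]
      simp [step, ih h]
  | rec0Arg C E ih =>
      intro e e' h
      simp only [Ctx.fill]
      simp [step, ih h]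
  | rec1Arg C a E ih =>
      intro e e' h
      have h' := ih h
      have hz : E.fill e ≠ Tm.zero := by
        rcases step_shape h' with ⟨a, b, hE⟩ | ⟨a, hE⟩ | ⟨a, hE⟩ | ⟨a, hE⟩ <;> simp [hE]
      simp only [Ctx.fill]
      simp [step, h', hz]
  | rec2Arg C a b E ih =>
      intro e e' h
      have h' := ih h
      have hz : E.fill e ≠ Tm.zero := by
        rcases step_shape h' with ⟨a, b, hE⟩ | ⟨a, hE⟩ | ⟨a, hE⟩ | ⟨a, hE⟩ <;> simp [hE]
      have ho : E.fill e ≠ Tm.one := by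
        rcases step_shape h' with ⟨a, b, hE⟩ | ⟨a, hE⟩ | ⟨a, hE⟩ | ⟨a, hE⟩ <;> simp [hE]
      simp only [Ctx.fill]
      simp [step, h', hz, ho]
  | recNArg C cz g E ih =>
      intro e e' h
      have h' := ih h
      have hn : toNum (E.fill e) = none := toNum_none_of_step h'
      simp only [Ctx.fill]
      simp [step, h', hn]

lemma step_complete {q : Cond} (hq : IsFunc q) {t u : Tm} (h : Red q t u) :
    step q t = some u := by
  induction h with
  | base hs =>
      cases hs with
      | beta t a => rfl
      | fstPair u v => rfl
      | sndPair u v => rfl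
      | rec1Zero C c => simp [step]
      | rec2Zero C c0 c1 => simp [step]
      | rec2One C c0 c1 => simp [step]
      | recNZero C cz g => simp [step, toNum]
      | recNSuc C cz g k => simp [step, toNum, toNum_numeral]
  | genRed hk =>
      rename_i k b
      simp [step, step_numeral, toNum_numeral, lookup_of_mem hq hk]
  | ctx E _ ih => exact step_fill E ih

lemma red_det {q : Cond} (hq : IsFunc q) {t u v : Tm} (h1 : Red q t u) (h2 : Red q t v) :
    u = v := by
  have := (step_complete hq h1).symm.trans (step_complete hq h2)
  simpa using this

lemma red_mono {p q : Cond} (h : p ⊆ q) {t u : Tm} (hr : Red p t u) : Red q t u := by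
  induction hr with
  | base hs => exact Red.base hs
  | genRed hk => exact Red.genRed (h hk)
  | ctx E _ ih => exact Red.ctx E ih

lemma canonical_any {p q : Cond} {t : Tm} (h : Canonical p t) : Canonical q t := by
  intro r _ u hu
  exact h (p ∪ r) Finset.subset_union_left u (red_mono Finset.subset_union_right hu)

lemma isFunc_ext {p : Cond} {m : ℕ} {b : Bool} (hp : IsFunc p) (hm : m ∉ condDom p) :
    IsFunc (condExt p m b) := by
  intro x hx y hy hxy
  rcases Finset.mem_insert.mp hx with rfl | hx' <;> rcases Finset.mem_insert.mp hy with rfl | hy'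
  · rfl
  · exact absurd (Finset.mem_image.mpr ⟨y, hy', hxy.symm⟩) hm
  · exact absurd (Finset.mem_image.mpr ⟨x, hx', hxy⟩) hm
  · exact hp x hx' y hy' hxy

/-- Composition of evaluation contexts. -/
def Ctx.comp : Ctx → Ctx → Ctx
  | .hole, F => F
  | .appL E u, F => .appL (E.comp F) u
  | .fst E, F => .fst (E.comp F)
  | .snd E, F => .snd (E.comp F)
  | .suc E, F => .suc (E.comp F)
  | .genApp E, F => .genApp (E.comp F)
  | .rec0Arg C E, F => .rec0Arg C (E.comp F)
  | .rec1Arg C a E, F => .rec1Arg C a (E.comp F)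
  | .rec2Arg C a b E, F => .rec2Arg C a b (E.comp F)
  | .recNArg C a g E, F => .recNArg C a g (E.comp F)

lemma Ctx.comp_fill (E F : Ctx) (e : Tm) : (E.comp F).fill e = E.fill (F.fill e) := by
  induction E <;> simp [Ctx.comp, Ctx.fill, *]

lemma red_ext_whnf {p : Cond} {m : ℕ} {b : Bool} {t u : Tm}
    (h : Red (condExt p m b) t u) :
    (∀ x, ¬ Red p t x) → ∃ E : Ctx, t = E.fill (.app .gen (numeral m)) := by
  induction h with
  | base hs => exact fun hw => absurd (Red.base hs) (hw _)
  | genRed hk =>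
      intro hw
      rcases Finset.mem_insert.mp hk with heq | hmem
      · injection heq with h1 h2
        subst h1
        exact ⟨Ctx.hole, rfl⟩
      · exact absurd (Red.genRed hmem) (hw _)
  | ctx E hr ih =>
      intro hw
      have hw' : ∀ x, ¬ Red p _ x := fun x hx => hw _ (Red.ctx E hx)
      obtain ⟨F, hF⟩ := ih hw'
      exact ⟨E.comp F, by rw [Ctx.comp_fill, hF]⟩

/-- If `m ∉ dom p` and `t` reduces to a proper `p(m↦0)`-whnf and to a proper
`p(m↦1)`-whnf, then `t` reduces to a proper `p`-whnf. -/
theorem stmt13 (p : Cond) (hp : IsFunc p) (m : ℕ) (hm : m ∉ condDom p) (t : Tm)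
    (h0 : ∃ u, Reds (condExt p m false) t u ∧ ProperWhnf (condExt p m false) u)
    (h1 : ∃ v, Reds (condExt p m true) t v ∧ ProperWhnf (condExt p m true) v) :
    ∃ w, Reds p t w ∧ ProperWhnf p w := by
  obtain ⟨u, htu, hu⟩ := h0
  obtain ⟨v, htv, hv⟩ := h1
  have hq0 : IsFunc (condExt p m false) := isFunc_ext hp hm
  have hq1 : IsFunc (condExt p m true) := isFunc_ext hp hm
  have hpq0 : p ⊆ condExt p m false := Finset.subset_insert _ _
  have hpq1 : p ⊆ condExt p m true := Finset.subset_insert _ _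
  revert htv
  induction htu using Relation.ReflTransGen.head_induction_on with
  | refl =>
      intro _
      have hnone : step p u = none := by
        cases hs : step p u with
        | none => rfl
        | some w => exact absurd (red_mono hpq0 (step_sound hs)) (hu.1 w)
      refine ⟨u, Relation.ReflTransGen.refl, ?_, ?_⟩
      · intro w hw
        rw [step_complete hp hw] at hnone
        exact Option.some_ne_none _ hnone
      · rcases hu.2 with hc | ⟨E, k, rfl, hk⟩
        · exact Or.inl (canonical_any hc)
        · refine Or.inr ⟨E, k, rfl, fun hkp => hk ?_⟩
          exact Finset.image_subset_image (Finset.subset_insert _ _) hkp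
  | head h01 h0' ih =>
      rename_i a a₁
      intro htv
      cases hs : step p a with
      | some a' =>
          have hpt : Red p a a' := step_sound hs
          have e1 : a₁ = a' := by
            have h1 := step_complete hq0 h01
            rw [step_complete hq0 (red_mono hpq0 hpt)] at h1
            exact (Option.some.inj h1).symm
          subst e1
          rcases (Relation.ReflTransGen.cases_head htv) with rfl | ⟨a₂, h12, htv'⟩
          · exact absurd (red_mono hpq1 hpt) (hv.1 _)
          · have e2 : a₂ = a₁ := red_det hq1 h12 (red_mono hpq1 hpt)
            subst e2
            obtain ⟨w, hw1, hw2⟩ := ih htv'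
            exact ⟨w, Relation.ReflTransGen.head hpt hw1, hw2⟩
      | none =>
          have hwh : ∀ x, ¬ Red p a x := by
            intro x hx
            rw [step_complete hp hx] at hs
            exact Option.some_ne_none _ hs
          obtain ⟨E, rfl⟩ := red_ext_whnf h01 hwh
          exact ⟨_, Relation.ReflTransGen.refl, hwh, Or.inr ⟨E, m, rfl, hm⟩⟩
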